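/- Under the assumptions that D and D̃ have entries bounded by d_max, d̃_max and normalized traces bounded below by positive constants, one has the strict inequality t²·γ(t)·γ̃(t) < 1 for all t > 0, so that σ²(t) = −log(1 − t²γγ̃) is well defined; moreover 1 − t²γγ̃ ≥ (n/N)²·δ²δ̃²/(d_max²·d̃_max²). -/

import Mathlib

open Finset

set_option maxHeartbeats 1000000 in
theorem variance_well_defined
    (N n : ℕ) (hN : 0 < N) (hn : 0 < n)
    (d : Fin N → ℝ) (dt : Fin n → ℝ) (dmax dtmax : ℝ)
    (hdmaxpos : 0 < dmax) (hdtmaxpos : 0 < dtmax)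
    (hd0 : ∀ i, 0 ≤ d i) (hdmax : ∀ i, d i ≤ dmax)
    (hdt0 : ∀ j, 0 ≤ dt j) (hdtmax : ∀ j, dt j ≤ dtmax)
    (htrD : 0 < ∑ i, d i) (htrDt : 0 < ∑ j, dt j)
    (t δ δt : ℝ) (ht : 0 < t) (hδ : 0 < δ) (hδt : 0 < δt)
    (heq1 : δ = (1 / (n : ℝ)) * ∑ i, d i / (1 + t * δt * d i))
    (heq2 : δt = (1 / (n : ℝ)) * ∑ j, dt j / (1 + t * δ * dt j))
    (γ γt : ℝ)
    (hγ : γ = (1 / (n : ℝ)) * ∑ i, (d i) ^ 2 / (1 + t * δt * d i) ^ 2)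
    (hγt : γt = (1 / (n : ℝ)) * ∑ j, (dt j) ^ 2 / (1 + t * δ * dt j) ^ 2) :
    t ^ 2 * γ * γt < 1 ∧
    ((n : ℝ) / N) ^ 2 * δ ^ 2 * δt ^ 2 / (dmax ^ 2 * dtmax ^ 2) ≤
      1 - t ^ 2 * γ * γt := by
  have hnpos : (0:ℝ) < n := by exact_mod_cast hn
  have hNpos : (0:ℝ) < N := by exact_mod_cast hN
  have he1 : ∀ i, (1:ℝ) ≤ 1 + t * δt * d i := fun i =>
    le_add_of_nonneg_right (mul_nonneg (mul_nonneg ht.le hδt.le) (hd0 i))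
  have hf1 : ∀ j, (1:ℝ) ≤ 1 + t * δ * dt j := fun j =>
    le_add_of_nonneg_right (mul_nonneg (mul_nonneg ht.le hδ.le) (hdt0 j))
  have he0 : ∀ i, (0:ℝ) < 1 + t * δt * d i := fun i => lt_of_lt_of_le one_pos (he1 i)
  have hf0 : ∀ j, (0:ℝ) < 1 + t * δ * dt j := fun j => lt_of_lt_of_le one_pos (hf1 j)
  obtain ⟨A, hA⟩ : ∃ A : ℝ, A = (1/(n:ℝ)) * ∑ i, d i / (1 + t * δt * d i)^2 := ⟨_, rfl⟩
  obtain ⟨B, hB⟩ : ∃ B : ℝ, B = (1/(n:ℝ)) * ∑ j, dt j / (1 + t * δ * dt j)^2 := ⟨_, rfl⟩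
  -- key identities
  have sumid1 : ∑ i, d i / (1 + t*δt*d i)
      = t*δt*(∑ i, (d i)^2/(1 + t*δt*d i)^2) + ∑ i, d i/(1 + t*δt*d i)^2 := by
    rw [Finset.mul_sum, ← Finset.sum_add_distrib]
    refine Finset.sum_congr rfl fun i _ => ?_
    have h := (he0 i).ne'
    rw [mul_div_assoc', ← add_div, eq_div_iff (pow_ne_zero 2 h), div_mul_eq_mul_div, div_eq_iff h]
    ring
  have sumid2 : ∑ j, dt j / (1 + t*δ*dt j)
      = t*δ*(∑ j, (dt j)^2/(1 + t*δ*dt j)^2) + ∑ j, dt j/(1 + t*δ*dt j)^2 := by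
    rw [Finset.mul_sum, ← Finset.sum_add_distrib]
    refine Finset.sum_congr rfl fun j _ => ?_
    have h := (hf0 j).ne'
    rw [mul_div_assoc', ← add_div, eq_div_iff (pow_ne_zero 2 h), div_mul_eq_mul_div, div_eq_iff h]
    ring
  have key1 : δ = t*δt*γ + A := by rw [heq1, hγ, hA, sumid1]; ring
  have key2 : δt = t*δ*γt + B := by rw [heq2, hγt, hB, sumid2]; ring
  -- A ≤ δ, B ≤ δt
  have hAδ : A ≤ δ := by
    rw [hA, heq1]
    refine mul_le_mul_of_nonneg_left (Finset.sum_le_sum fun i _ => ?_) (by positivity)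
    have h1 := he0 i
    have h2 := he1 i
    exact div_le_div_of_nonneg_left (hd0 i) h1 (by nlinarith)
  have hBδt : B ≤ δt := by
    rw [hB, heq2]
    refine mul_le_mul_of_nonneg_left (Finset.sum_le_sum fun j _ => ?_) (by positivity)
    have h1 := hf0 j
    have h2 := hf1 j
    exact div_le_div_of_nonneg_left (hdt0 j) h1 (by nlinarith)
  -- positivity of A, B
  obtain ⟨i0, hi0⟩ : ∃ i, 0 < d i := by
    by_contra h
    push_neg at h
    have : ∑ i, d i ≤ 0 := Finset.sum_nonpos fun i _ => h i
    linarith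
  obtain ⟨j0, hj0⟩ : ∃ j, 0 < dt j := by
    by_contra h
    push_neg at h
    have : ∑ j, dt j ≤ 0 := Finset.sum_nonpos fun j _ => h j
    linarith
  have hApos : 0 < A := by
    rw [hA]
    refine mul_pos (by positivity) (Finset.sum_pos' (fun i _ => div_nonneg (hd0 i) (by positivity)) ⟨i0, Finset.mem_univ _, div_pos hi0 (by positivity)⟩)
  have hBpos : 0 < B := by
    rw [hB]
    refine mul_pos (by positivity) (Finset.sum_pos' (fun j _ => div_nonneg (hdt0 j) (by positivity)) ⟨j0, Finset.mem_univ _, div_pos hj0 (by positivity)⟩)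
  -- Cauchy–Schwarz
  have cs1 : (∑ i, d i / (1 + t*δt*d i))^2 ≤ (∑ i, d i) * (∑ i, d i/(1 + t*δt*d i)^2) := by
    have h := Finset.sum_mul_sq_le_sq_mul_sq Finset.univ (fun i => Real.sqrt (d i))
      (fun i => Real.sqrt (d i) / (1 + t*δt*d i))
    have e1 : ∀ i : Fin N, Real.sqrt (d i) * (Real.sqrt (d i) / (1 + t*δt*d i)) = d i / (1 + t*δt*d i) := by
      intro i; rw [mul_div_assoc', Real.mul_self_sqrt (hd0 i)]
    have e2 : ∀ i : Fin N, (Real.sqrt (d i))^2 = d i := fun i => Real.sq_sqrt (hd0 i)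
    have e3 : ∀ i : Fin N, (Real.sqrt (d i) / (1 + t*δt*d i))^2 = d i / (1 + t*δt*d i)^2 := by
      intro i; rw [div_pow, Real.sq_sqrt (hd0 i)]
    simpa only [e1, e2, e3] using h
  have cs2 : (∑ j, dt j / (1 + t*δ*dt j))^2 ≤ (∑ j, dt j) * (∑ j, dt j/(1 + t*δ*dt j)^2) := by
    have h := Finset.sum_mul_sq_le_sq_mul_sq Finset.univ (fun j => Real.sqrt (dt j))
      (fun j => Real.sqrt (dt j) / (1 + t*δ*dt j))
    have e1 : ∀ j : Fin n, Real.sqrt (dt j) * (Real.sqrt (dt j) / (1 + t*δ*dt j)) = dt j / (1 + t*δ*dt j) := by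
      intro j; rw [mul_div_assoc', Real.mul_self_sqrt (hdt0 j)]
    have e2 : ∀ j : Fin n, (Real.sqrt (dt j))^2 = dt j := fun j => Real.sq_sqrt (hdt0 j)
    have e3 : ∀ j : Fin n, (Real.sqrt (dt j) / (1 + t*δ*dt j))^2 = dt j / (1 + t*δ*dt j)^2 := by
      intro j; rw [div_pow, Real.sq_sqrt (hdt0 j)]
    simpa only [e1, e2, e3] using h
  -- trace bounds
  have htrDub : ∑ i, d i ≤ (N:ℝ) * dmax := by
    calc ∑ i, d i ≤ ∑ _i : Fin N, dmax := Finset.sum_le_sum fun i _ => hdmax i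
    _ = (N:ℝ) * dmax := by simp [Finset.sum_const, Finset.card_univ, mul_comm]
  have htrDtub : ∑ j, dt j ≤ (n:ℝ) * dtmax := by
    calc ∑ j, dt j ≤ ∑ _j : Fin n, dtmax := Finset.sum_le_sum fun j _ => hdtmax j
    _ = (n:ℝ) * dtmax := by simp [Finset.sum_const, Finset.card_univ, mul_comm]
  -- n δ = Σ d/e etc.
  have hnδ : (n:ℝ) * δ = ∑ i, d i / (1 + t*δt*d i) := by
    rw [heq1]; field_simp; exact Finset.sum_congr rfl fun _ _ => by ring
  have hnδt : (n:ℝ) * δt = ∑ j, dt j / (1 + t*δ*dt j) := by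
    rw [heq2]; field_simp; exact Finset.sum_congr rfl fun _ _ => by ring
  have hnA : (n:ℝ) * A = ∑ i, d i / (1 + t*δt*d i)^2 := by
    rw [hA]; field_simp; exact Finset.sum_congr rfl fun _ _ => by ring
  have hnB : (n:ℝ) * B = ∑ j, dt j / (1 + t*δ*dt j)^2 := by
    rw [hB]; field_simp; exact Finset.sum_congr rfl fun _ _ => by ring
  -- lower bounds on A, B
  have hAlb : (n:ℝ) * δ^2 ≤ (N:ℝ) * dmax * A := by
    have h1 : ((n:ℝ)*δ)^2 ≤ (∑ i, d i) * ((n:ℝ)*A) := by rw [hnδ, hnA]; exact cs1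
    have h2 : (∑ i, d i) * ((n:ℝ)*A) ≤ ((N:ℝ)*dmax) * ((n:ℝ)*A) :=
      mul_le_mul_of_nonneg_right htrDub (by positivity)
    have h3 : (n:ℝ) * ((n:ℝ)*δ^2) ≤ (n:ℝ) * ((N:ℝ)*dmax*A) := by
      calc (n:ℝ) * ((n:ℝ)*δ^2) = ((n:ℝ)*δ)^2 := by ring
      _ ≤ ((N:ℝ)*dmax) * ((n:ℝ)*A) := h1.trans h2
      _ = (n:ℝ) * ((N:ℝ)*dmax*A) := by ring
    exact le_of_mul_le_mul_left h3 hnpos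
  have hBlb : δt^2 ≤ dtmax * B := by
    have h1 : ((n:ℝ)*δt)^2 ≤ (∑ j, dt j) * ((n:ℝ)*B) := by rw [hnδt, hnB]; exact cs2
    have h2 : (∑ j, dt j) * ((n:ℝ)*B) ≤ ((n:ℝ)*dtmax) * ((n:ℝ)*B) :=
      mul_le_mul_of_nonneg_right htrDtub (by positivity)
    have h3 : (n:ℝ)^2 * (δt^2) ≤ (n:ℝ)^2 * (dtmax*B) := by
      calc (n:ℝ)^2 * (δt^2) = ((n:ℝ)*δt)^2 := by ring
      _ ≤ ((n:ℝ)*dtmax) * ((n:ℝ)*B) := h1.trans h2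
      _ = (n:ℝ)^2 * (dtmax*B) := by ring
    exact le_of_mul_le_mul_left h3 (by positivity)
  -- upper bounds on δ, δt
  have hδub : (n:ℝ) * δ ≤ (N:ℝ) * dmax := by
    rw [hnδ]
    calc ∑ i, d i / (1 + t*δt*d i) ≤ ∑ i, d i :=
      Finset.sum_le_sum fun i _ => div_le_self (hd0 i) (he1 i)
    _ ≤ (N:ℝ) * dmax := htrDub
  have hδtub : (n:ℝ) * δt ≤ (n:ℝ) * dtmax := by
    rw [hnδt]
    calc ∑ j, dt j / (1 + t*δ*dt j) ≤ ∑ j, dt j :=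
      Finset.sum_le_sum fun j _ => div_le_self (hdt0 j) (hf1 j)
    _ ≤ (n:ℝ) * dtmax := htrDtub
  have hδtub' : δt ≤ dtmax := le_of_mul_le_mul_left (by linarith) hnpos
  -- assemble
  have hmul : (1 - t^2*γ*γt) * (δ*δt) = A*δt + B*δ - A*B := by
    have h : t^2*γ*γt*(δ*δt) = (δ-A)*(δt-B) := by
      have h1 : t*δt*γ = δ - A := by linarith
      have h2 : t*δ*γt = δt - B := by linarith
      calc t^2*γ*γt*(δ*δt) = (t*δt*γ)*(t*δ*γt) := by ring
      _ = (δ-A)*(δt-B) := by rw [h1, h2]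
    linear_combination -h
  have hMAB : A*B ≤ A*δt + B*δ - A*B := by
    have h1 : 0 ≤ A*(δt-B) := mul_nonneg hApos.le (sub_nonneg.2 hBδt)
    have h2 : 0 ≤ B*(δ-A) := mul_nonneg hBpos.le (sub_nonneg.2 hAδ)
    nlinarith [h1, h2]
  have hABlb : (n:ℝ) * δ^2 * δt^2 ≤ (N:ℝ)*dmax*dtmax*(A*B) := by
    have h3 : ((n:ℝ)*δ^2)*(δt^2) ≤ ((N:ℝ)*dmax*A)*(dtmax*B) :=
      mul_le_mul hAlb hBlb (by positivity) (by positivity)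
    calc (n:ℝ) * δ^2 * δt^2 = ((n:ℝ)*δ^2)*(δt^2) := by ring
    _ ≤ ((N:ℝ)*dmax*A)*(dtmax*B) := h3
    _ = (N:ℝ)*dmax*dtmax*(A*B) := by ring
  have hδδt : (n:ℝ)*(δ*δt) ≤ (N:ℝ)*dmax*dtmax := by
    calc (n:ℝ)*(δ*δt) = ((n:ℝ)*δ)*δt := by ring
    _ ≤ ((N:ℝ)*dmax)*dtmax := mul_le_mul hδub hδtub' hδt.le (by positivity)
    _ = (N:ℝ)*dmax*dtmax := by ring
  have hcore : (n:ℝ)^2*δ^2*δt^2*(δ*δt) ≤ (A*δt + B*δ - A*B)*((N:ℝ)^2*dmax^2*dtmax^2) := by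
    have h4 : ((n:ℝ)*δ^2*δt^2)*((n:ℝ)*(δ*δt)) ≤ ((N:ℝ)*dmax*dtmax*(A*B))*((N:ℝ)*dmax*dtmax) :=
      mul_le_mul hABlb hδδt (by positivity) (by positivity)
    have h5 : (A*B)*((N:ℝ)^2*dmax^2*dtmax^2) ≤ (A*δt + B*δ - A*B)*((N:ℝ)^2*dmax^2*dtmax^2) :=
      mul_le_mul_of_nonneg_right hMAB (by positivity)
    calc (n:ℝ)^2*δ^2*δt^2*(δ*δt) = ((n:ℝ)*δ^2*δt^2)*((n:ℝ)*(δ*δt)) := by ring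
    _ ≤ ((N:ℝ)*dmax*dtmax*(A*B))*((N:ℝ)*dmax*dtmax) := h4
    _ = (A*B)*((N:ℝ)^2*dmax^2*dtmax^2) := by ring
    _ ≤ (A*δt + B*δ - A*B)*((N:ℝ)^2*dmax^2*dtmax^2) := h5
  have h1mP : 1 - t^2*γ*γt = (A*δt + B*δ - A*B) / (δ*δt) := by
    rw [eq_div_iff (ne_of_gt (mul_pos hδ hδt))]
    exact hmul
  have hMpos : 0 < A*δt + B*δ - A*B := lt_of_lt_of_le (mul_pos hApos hBpos) hMAB
  constructor
  · have : 0 < (A*δt + B*δ - A*B) / (δ*δt) := div_pos hMpos (mul_pos hδ hδt)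
    linarith [h1mP ▸ this]
  · rw [show ((n:ℝ)/N)^2*δ^2*δt^2/(dmax^2*dtmax^2)
        = ((n:ℝ)^2*δ^2*δt^2)/((N:ℝ)^2*(dmax^2*dtmax^2)) from by rw [div_pow]; ring]
    rw [h1mP, div_le_div_iff₀ (by positivity) (mul_pos hδ hδt)]
    calc (n:ℝ)^2*δ^2*δt^2*(δ*δt) ≤ (A*δt + B*δ - A*B)*((N:ℝ)^2*dmax^2*dtmax^2) := hcore
    _ = (A*δt + B*δ - A*B)*((N:ℝ)^2*(dmax^2*dtmax^2)) := by ring
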